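/- Let F be a set functor and Λ an F-relator that maps difunctional relations to difunctional relations and such that for every jointly surjective cospan of functions (f : X → A, g : Y → A) one has Λ(g° · f) ≤ (Fg)° · Ff. Then Λ-similarity is sound: for all F-coalgebras (X,α), (Y,β) and all states x ∈ X, y ∈ Y, if x and y are Λ-similar then x and y are behaviourally equivalent. -/

import Mathlib

open CategoryTheory Function

universe u

/-- Applicative composition of relations: `relComp s r = s · r`. -/
def relComp {X Y Z : Type u} (s : Y → Z → Prop) (r : X → Y → Prop) : X → Z → Prop :=
  fun x z => ∃ y, r x y ∧ s y z

/-- Converse of a relation. -/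
def relConv {X Y : Type u} (r : X → Y → Prop) : Y → X → Prop := fun y x => r x y

/-- Graph relation of a function. -/
def fgraph {X Y : Type u} (f : X → Y) : X → Y → Prop := fun x y => f x = y

/-- An `F`-relator: a monotone assignment of relations `F X ⇸ F Y` to relations `X ⇸ Y`. -/
structure Relator (F : Type u ⥤ Type u) : Type (u + 1) where
  map : ∀ {X Y : Type u}, (X → Y → Prop) → (F.obj X → F.obj Y → Prop)
  mono : ∀ {X Y : Type u} {r s : X → Y → Prop}, (∀ x y, r x y → s x y) →
    ∀ u v, map r u v → map s u v

/-- `f` is a coalgebra homomorphism from `(X, α)` to `(Y, β)`. -/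
def IsCoalgHom (F : Type u ⥤ Type u) {X Y : Type u} (α : X → F.obj X) (β : Y → F.obj Y)
    (f : X → Y) : Prop :=
  ∀ x, β (f x) = F.map (TypeCat.ofHom f) (α x)

/-- Behavioural equivalence of states. -/
def BehEq (F : Type u ⥤ Type u) {X Y : Type u} (α : X → F.obj X) (β : Y → F.obj Y)
    (x : X) (y : Y) : Prop :=
  ∃ (Z : Type u) (γ : Z → F.obj Z) (f : X → Z) (g : Y → Z),
    IsCoalgHom F α γ f ∧ IsCoalgHom F β γ g ∧ f x = g y

/-- `r` is a `Λ`-simulation from `(X, α)` to `(Y, β)`: `r ≤ β° · Λr · α`. -/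
def IsSimulation {F : Type u ⥤ Type u} (Λ : Relator F) {X Y : Type u}
    (α : X → F.obj X) (β : Y → F.obj Y) (r : X → Y → Prop) : Prop :=
  ∀ x y, r x y → Λ.map r (α x) (β y)

/-- `x` and `y` are `Λ`-similar: related by some `Λ`-simulation. -/
def RelSimilar {F : Type u ⥤ Type u} (Λ : Relator F) {X Y : Type u}
    (α : X → F.obj X) (β : Y → F.obj Y) (x : X) (y : Y) : Prop :=
  ∃ r, IsSimulation Λ α β r ∧ r x y

/-- A relation is difunctional if it is of the form `g° · f` for functions `f`, `g`. -/
def IsDifunctional {X Y : Type u} (r : X → Y → Prop) : Prop :=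
  ∃ (Z : Type u) (f : X → Z) (g : Y → Z), ∀ x y, r x y ↔ f x = g y

/-- If an `F`-relator `Λ` maps difunctional relations to difunctional
relations and satisfies `Λ(g° · f) ≤ (Fg)° · Ff` for every jointly surjective cospan
`(f : X → A, g : Y → A)`, then `Λ`-similarity is sound: `Λ`-similar states are
behaviourally equivalent. -/
theorem stmt1 (F : Type u ⥤ Type u) (Λ : Relator F)
    (hdif : ∀ {X Y : Type u} (r : X → Y → Prop),
      IsDifunctional r → IsDifunctional (Λ.map r))
    (hcos : ∀ {X Y A : Type u} (f : X → A) (g : Y → A),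
      (∀ a, (∃ x, f x = a) ∨ (∃ y, g y = a)) →
      ∀ (u : F.obj X) (v : F.obj Y),
        Λ.map (fun x y => f x = g y) u v → F.map (TypeCat.ofHom f) u = F.map (TypeCat.ofHom g) v)
    {X Y : Type u} (α : X → F.obj X) (β : Y → F.obj Y) (x : X) (y : Y)
    (h : RelSimilar Λ α β x y) : BehEq F α β x y := by
  obtain ⟨r, hsim, hrxy⟩ := h
  set rel : (X ⊕ Y) → (X ⊕ Y) → Prop :=
    fun a b => ∃ x y, a = Sum.inl x ∧ b = Sum.inr y ∧ r x y with hrel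
  set Z := Quot rel with hZ
  set f : X → Z := fun x => Quot.mk rel (Sum.inl x) with hf
  set g : Y → Z := fun y => Quot.mk rel (Sum.inr y) with hg
  have hle : ∀ x y, r x y → f x = g y := fun x y hxy =>
    Quot.sound ⟨x, y, rfl, rfl, hxy⟩
  have hsurj : ∀ a : Z, (∃ x, f x = a) ∨ (∃ y, g y = a) := by
    intro a
    induction a using Quot.ind with
    | _ s =>
      cases s with
      | inl x => exact Or.inl ⟨x, rfl⟩
      | inr y => exact Or.inr ⟨y, rfl⟩
  have key : ∀ x y, r x y → F.map (TypeCat.ofHom f) (α x) = F.map (TypeCat.ofHom g) (β y) := by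
    intro x y hxy
    exact hcos f g hsurj (α x) (β y)
      (Λ.mono hle (α x) (β y) (hsim x y hxy))
  set φ : (X ⊕ Y) → F.obj Z := Sum.elim (fun x => F.map (TypeCat.ofHom f) (α x)) (fun y => F.map (TypeCat.ofHom g) (β y))
    with hφ
  have hresp : ∀ a b, rel a b → φ a = φ b := by
    rintro a b ⟨x, y, rfl, rfl, hxy⟩
    exact key x y hxy
  refine ⟨Z, Quot.lift φ hresp, f, g, fun x => rfl, fun y => rfl, hle x y hrxy⟩
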